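/- arXiv:math/0410389 — 2 statements merged into one kernel-verified Lean document; each statement's English description precedes it below -/
import Mathlib

section
/- Let q > 1 be real, λ = q − q^{−1}, γ ∈ ℝ, and let ε be a nonzero complex number. Then the function g(x) = x · ₁φ₁(−q^{−2} ε^{−1}; q^{−6}; q^{−4}, ε q^{−2γ−5} λ² x²) satisfies, for every real x, the reduced eigenvalue equation 0 = g(x)·(q + q^{−1} − ε q^{−2γ} λ² x²) − q^{−1} g(q² x) − q g(q^{−2} x)·(1 + q^{−2γ−1} λ² x²). -/
open scoped BigOperators

/-- The q-shifted factorial `(a;p)_n = ∏_{i=0}^{n-1} (1 - a p^i)`. -/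
noncomputable def qPoch (a p : ℂ) (n : ℕ) : ℂ :=
  ∏ i ∈ Finset.range n, (1 - a * p ^ i)

/-- The basic hypergeometric series
`₁φ₁(a;c;p,z) = ∑_{j=0}^∞ ((a;p)_j / ((p;p)_j (c;p)_j)) (-1)^j p^(j(j-1)/2) z^j`. -/
noncomputable def phi11 (a c p z : ℂ) : ℂ :=
  ∑' j : ℕ, qPoch a p j / (qPoch p p j * qPoch c p j) * (-1) ^ j *
    p ^ (j * (j - 1) / 2) * z ^ j

open Filter

noncomputable def coefT (a c p : ℂ) (j : ℕ) : ℂ :=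
  qPoch a p j / (qPoch p p j * qPoch c p j) * (-1) ^ j * p ^ (j * (j - 1) / 2)

lemma phi11_eq (a c p z : ℂ) : phi11 a c p z = ∑' j : ℕ, coefT a c p j * z ^ j := rfl

lemma qPoch_ne_zero {a p : ℂ} (h : ∀ i : ℕ, ‖a * p ^ i‖ < 1) (n : ℕ) : qPoch a p n ≠ 0 := by
  unfold qPoch
  refine Finset.prod_ne_zero_iff.mpr fun i _ => sub_ne_zero.mpr fun he => ?_
  have := h i
  rw [← he] at this
  simp at this

lemma qPoch_p_ne_zero {p : ℂ} (hp : ‖p‖ < 1) (n : ℕ) : qPoch p p n ≠ 0 := by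
  refine qPoch_ne_zero (fun i => ?_) n
  have h0 : (0:ℝ) ≤ ‖p‖ := norm_nonneg _
  calc ‖p * p ^ i‖ = ‖p‖ * ‖p‖ ^ i := by rw [norm_mul, norm_pow]
    _ ≤ ‖p‖ * 1 := by
        exact mul_le_mul_of_nonneg_left (pow_le_one₀ h0 hp.le) h0
    _ < 1 := by simpa using hp

lemma qPoch_c_ne_zero {c p : ℂ} (hp : ‖p‖ < 1) (hc : ‖c‖ < 1) (n : ℕ) : qPoch c p n ≠ 0 := by
  refine qPoch_ne_zero (fun i => ?_) n
  have h0 : (0:ℝ) ≤ ‖c‖ := norm_nonneg _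
  calc ‖c * p ^ i‖ = ‖c‖ * ‖p‖ ^ i := by rw [norm_mul, norm_pow]
    _ ≤ ‖c‖ * 1 := mul_le_mul_of_nonneg_left (pow_le_one₀ (norm_nonneg _) hp.le) h0
    _ < 1 := by simpa using hc

lemma coefT_succ (a c p : ℂ) (hp : ‖p‖ < 1) (hc : ‖c‖ < 1) (j : ℕ) :
    coefT a c p (j + 1) =
      coefT a c p j * (-(1 - a * p ^ j) * p ^ j / ((1 - p * p ^ j) * (1 - c * p ^ j))) := by
  have hpj : qPoch p p j ≠ 0 := qPoch_p_ne_zero hp j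
  have hcj : qPoch c p j ≠ 0 := qPoch_c_ne_zero hp hc j
  have hp1 : (1 - p * p ^ j) ≠ 0 := by
    have := qPoch_p_ne_zero hp (j+1)
    unfold qPoch at this
    rw [Finset.prod_range_succ] at this
    exact right_ne_zero_of_mul this
  have hc1 : (1 - c * p ^ j) ≠ 0 := by
    have := qPoch_c_ne_zero hp hc (j+1)
    unfold qPoch at this
    rw [Finset.prod_range_succ] at this
    exact right_ne_zero_of_mul this
  unfold coefT
  rw [Nat.triangle_succ]
  simp only [qPoch, Finset.prod_range_succ]
  rw [pow_add, pow_succ]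
  field_simp
  ring

lemma summable_coefT (a c p z : ℂ) (hp : ‖p‖ < 1) (hc : ‖c‖ < 1) :
    Summable fun j : ℕ => coefT a c p j * z ^ j := by
  apply summable_of_ratio_norm_eventually_le (r := 1/2) (by norm_num)
  have hpj : Tendsto (fun j : ℕ => p ^ j) atTop (nhds 0) :=
    tendsto_pow_atTop_nhds_zero_of_norm_lt_one hp
  have hnum : Tendsto (fun j : ℕ => -(1 - a * p ^ j) * p ^ j * z) atTop (nhds 0) := by
    have := (((tendsto_const_nhds (x := (1:ℂ))).sub
      ((tendsto_const_nhds (x := a)).mul hpj)).neg.mul hpj).mul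
      (tendsto_const_nhds (x := z))
    simpa using this
  have hden : Tendsto (fun j : ℕ => (1 - p * p ^ j) * (1 - c * p ^ j)) atTop (nhds 1) := by
    have := ((tendsto_const_nhds (x := (1:ℂ))).sub
      ((tendsto_const_nhds (x := p)).mul hpj)).mul
      ((tendsto_const_nhds (x := (1:ℂ))).sub ((tendsto_const_nhds (x := c)).mul hpj))
    simpa using this
  have hrat : Tendsto
      (fun j : ℕ => ‖(-(1 - a * p ^ j) * p ^ j / ((1 - p * p ^ j) * (1 - c * p ^ j))) * z‖)
      atTop (nhds 0) := by
    have h := (hnum.div hden (one_ne_zero)).norm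
    simp only [Pi.div_apply, zero_div, norm_zero] at h
    have heq : (fun j : ℕ =>
        ‖(-(1 - a * p ^ j) * p ^ j / ((1 - p * p ^ j) * (1 - c * p ^ j))) * z‖) =
        fun j : ℕ =>
        ‖-(1 - a * p ^ j) * p ^ j * z / ((1 - p * p ^ j) * (1 - c * p ^ j))‖ := by
      funext j
      rw [div_mul_eq_mul_div]
    rw [heq]
    exact h
  filter_upwards [hrat.eventually_le_const (by norm_num : (0:ℝ) < 1/2)] with j hj
  have hrec : coefT a c p (j+1) * z ^ (j+1) =
      (coefT a c p j * z ^ j) *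
      ((-(1 - a * p ^ j) * p ^ j / ((1 - p * p ^ j) * (1 - c * p ^ j))) * z) := by
    rw [coefT_succ a c p hp hc j, pow_succ]; ring
  rw [hrec, norm_mul]
  calc ‖coefT a c p j * z ^ j‖ * ‖_‖ ≤ ‖coefT a c p j * z ^ j‖ * (1/2) := by
        exact mul_le_mul_of_nonneg_left hj (norm_nonneg _)
    _ = 1/2 * ‖coefT a c p j * z ^ j‖ := by ring


lemma cast_inv_pow_lt_one {q : ℝ} (hq : 1 < q) (n : ℕ) (hn : n ≠ 0) :
    ‖(((q:ℂ)) ^ n)⁻¹‖ < 1 := by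
  have h1 : (1:ℝ) < q ^ n := one_lt_pow₀ hq hn
  rw [norm_inv, norm_pow, Complex.norm_real, Real.norm_eq_abs,
    abs_of_pos (lt_trans one_pos hq)]
  rw [inv_lt_one_iff₀]
  right; exact h1

lemma one_sub_cast_ne {r : ℝ} (h : r < 1) : (1:ℂ) - (r:ℝ) ≠ 0 := by
  rw [sub_ne_zero]
  intro he
  have : (1:ℝ) = r := by exact_mod_cast he
  linarith

set_option maxHeartbeats 1000000 in
lemma ratio_alg (Q E P v z T : ℂ) (hQ : Q ≠ 0) (hE : E ≠ 0) (hP : P ≠ 0)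
    (hd1 : (1:ℂ) - (Q^4)⁻¹ * P⁻¹ ≠ 0) (hd2 : (1:ℂ) - (Q^6)⁻¹ * P⁻¹ ≠ 0) :
    T * (-(1 - -(Q^2)⁻¹ * E⁻¹ * P⁻¹) * P⁻¹ / ((1 - (Q^4)⁻¹ * P⁻¹) * (1 - (Q^6)⁻¹ * P⁻¹))) *
        (v * z) * (Q + Q⁻¹)
      - Q * (T * (-(1 - -(Q^2)⁻¹ * E⁻¹ * P⁻¹) * P⁻¹ /
          ((1 - (Q^4)⁻¹ * P⁻¹) * (1 - (Q^6)⁻¹ * P⁻¹))) * (P * v * (Q^4 * z)))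
      - Q⁻¹ * (T * (-(1 - -(Q^2)⁻¹ * E⁻¹ * P⁻¹) * P⁻¹ /
          ((1 - (Q^4)⁻¹ * P⁻¹) * (1 - (Q^6)⁻¹ * P⁻¹))) * (P⁻¹ * v * ((Q^4)⁻¹ * z)))
    = T * v * (Q^5 * z) + Q⁻¹ * (T * (P⁻¹ * v)) * (E⁻¹ * Q^4 * z) := by
  have hD : ((1 - (Q^4)⁻¹ * P⁻¹) * (1 - (Q^6)⁻¹ * P⁻¹)) ≠ 0 := mul_ne_zero hd1 hd2
  have step : T * (-(1 - -(Q^2)⁻¹ * E⁻¹ * P⁻¹) * P⁻¹ /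
          ((1 - (Q^4)⁻¹ * P⁻¹) * (1 - (Q^6)⁻¹ * P⁻¹))) * (v * z) * (Q + Q⁻¹)
      - Q * (T * (-(1 - -(Q^2)⁻¹ * E⁻¹ * P⁻¹) * P⁻¹ /
          ((1 - (Q^4)⁻¹ * P⁻¹) * (1 - (Q^6)⁻¹ * P⁻¹))) * (P * v * (Q^4 * z)))
      - Q⁻¹ * (T * (-(1 - -(Q^2)⁻¹ * E⁻¹ * P⁻¹) * P⁻¹ /
          ((1 - (Q^4)⁻¹ * P⁻¹) * (1 - (Q^6)⁻¹ * P⁻¹))) * (P⁻¹ * v * ((Q^4)⁻¹ * z)))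
      = (T * (-(1 - -(Q^2)⁻¹ * E⁻¹ * P⁻¹) * P⁻¹) *
          ((v * z) * (Q + Q⁻¹) - Q * (P * v * (Q^4 * z)) - Q⁻¹ * (P⁻¹ * v * ((Q^4)⁻¹ * z)))) /
        ((1 - (Q^4)⁻¹ * P⁻¹) * (1 - (Q^6)⁻¹ * P⁻¹)) := by
    ring
  rw [step, div_eq_iff hD]
  have h4 : (Q:ℂ)^4 ≠ 0 := pow_ne_zero _ hQ
  have h2 : (Q:ℂ)^2 ≠ 0 := pow_ne_zero _ hQ
  have h6 : (Q:ℂ)^6 ≠ 0 := pow_ne_zero _ hQ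
  field_simp [hQ, hE, hP]
  ring

set_option maxHeartbeats 1000000 in
lemma master (q : ℝ) (hq : 1 < q) (ε : ℂ) (hε : ε ≠ 0) (z : ℂ) :
    (∑' j : ℕ, coefT (-((q:ℂ)^2)⁻¹ * ε⁻¹) (((q:ℂ)^6)⁻¹) (((q:ℂ)^4)⁻¹) j * z ^ j) *
        ((q:ℂ) + (q:ℂ)⁻¹ - (q:ℂ)^5 * z)
      - (q:ℂ) * (∑' j : ℕ, coefT (-((q:ℂ)^2)⁻¹ * ε⁻¹) (((q:ℂ)^6)⁻¹) (((q:ℂ)^4)⁻¹) j *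
          ((q:ℂ)^4 * z) ^ j)
      - (q:ℂ)⁻¹ * (∑' j : ℕ, coefT (-((q:ℂ)^2)⁻¹ * ε⁻¹) (((q:ℂ)^6)⁻¹) (((q:ℂ)^4)⁻¹) j *
          (((q:ℂ)^4)⁻¹ * z) ^ j) * (1 + ε⁻¹ * (q:ℂ)^4 * z) = 0 := by
  have hq0 : (0:ℝ) < q := lt_trans one_pos hq
  have hQ : (q:ℂ) ≠ 0 := by exact_mod_cast hq0.ne'
  set a : ℂ := -((q:ℂ)^2)⁻¹ * ε⁻¹ with ha
  set c : ℂ := ((q:ℂ)^6)⁻¹ with hcdef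
  set p : ℂ := ((q:ℂ)^4)⁻¹ with hpdef
  have hp : ‖p‖ < 1 := cast_inv_pow_lt_one hq 4 (by norm_num)
  have hc : ‖c‖ < 1 := cast_inv_pow_lt_one hq 6 (by norm_num)
  set t : ℕ → ℂ := coefT a c p with ht
  clear_value a c p t
  -- summability
  have hs1 : Summable fun j : ℕ => t j * z ^ j := by
    rw [ht]; exact summable_coefT a c p z hp hc
  have hs2 : Summable fun j : ℕ => t j * ((q:ℂ)^4 * z) ^ j := by
    rw [ht]; exact summable_coefT a c p _ hp hc
  have hs3 : Summable fun j : ℕ => t j * (p * z) ^ j := by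
    rw [ht]; exact summable_coefT a c p _ hp hc
  have hF1 : Summable fun j : ℕ => t j * z ^ j * ((q:ℂ) + (q:ℂ)⁻¹ - (q:ℂ)^5 * z) :=
    hs1.mul_right _
  have hF2 : Summable fun j : ℕ => (q:ℂ) * (t j * ((q:ℂ)^4 * z) ^ j) := hs2.mul_left _
  have hF3 : Summable fun j : ℕ =>
      (q:ℂ)⁻¹ * (t j * (p * z) ^ j) * (1 + ε⁻¹ * (q:ℂ)^4 * z) :=
    (hs3.mul_left _).mul_right _
  -- the split into w and s
  set w : ℕ → ℂ := fun j => t j * z ^ j * ((q:ℂ) + (q:ℂ)⁻¹)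
      - (q:ℂ) * (t j * ((q:ℂ)^4 * z) ^ j) - (q:ℂ)⁻¹ * (t j * (p * z) ^ j) with hwdef
  set s : ℕ → ℂ := fun j => t j * z ^ j * ((q:ℂ)^5 * z)
      + (q:ℂ)⁻¹ * (t j * (p * z) ^ j) * (ε⁻¹ * (q:ℂ)^4 * z) with hsdef
  clear_value w s
  have hw : Summable w := by
    rw [hwdef]
    exact ((hs1.mul_right _).sub (hs2.mul_left _)).sub (hs3.mul_left _)
  have hs : Summable s := by
    rw [hsdef]
    exact (hs1.mul_right _).add ((hs3.mul_left _).mul_right _)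
  -- nonzero denominators
  have hden1 : ∀ j : ℕ, (1:ℂ) - p * p ^ j ≠ 0 := by
    intro j
    have he : p * p ^ j = ((((q^4)⁻¹ * ((q^4)⁻¹) ^ j : ℝ)) : ℂ) := by
      rw [hpdef]; push_cast; ring
    rw [he]
    apply one_sub_cast_ne
    have h1 : (1:ℝ) < q ^ 4 := one_lt_pow₀ hq (by norm_num)
    have h2 : ((q:ℝ)^4)⁻¹ < 1 := by
      rw [inv_lt_one_iff₀]; right; exact h1
    have h3 : (0:ℝ) < ((q:ℝ)^4)⁻¹ := by positivity
    have h4 : ((q:ℝ)^4)⁻¹ ^ j ≤ 1 := pow_le_one₀ h3.le h2.le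
    nlinarith
  have hden2 : ∀ j : ℕ, (1:ℂ) - c * p ^ j ≠ 0 := by
    intro j
    have he : c * p ^ j = ((((q^6)⁻¹ * ((q^4)⁻¹) ^ j : ℝ)) : ℂ) := by
      rw [hpdef, hcdef]; push_cast; ring
    rw [he]
    apply one_sub_cast_ne
    have h1 : (1:ℝ) < q ^ 6 := one_lt_pow₀ hq (by norm_num)
    have h1' : (1:ℝ) < q ^ 4 := one_lt_pow₀ hq (by norm_num)
    have h2 : ((q:ℝ)^6)⁻¹ < 1 := by rw [inv_lt_one_iff₀]; right; exact h1
    have h2' : ((q:ℝ)^4)⁻¹ < 1 := by rw [inv_lt_one_iff₀]; right; exact h1'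
    have h3 : (0:ℝ) < ((q:ℝ)^6)⁻¹ := by positivity
    have h4 : ((q:ℝ)^4)⁻¹ ^ j ≤ 1 := pow_le_one₀ (by positivity) h2'.le
    nlinarith
  -- termwise identity
  have hw0 : w 0 = 0 := by simp [hwdef]; ring
  have hterm : ∀ j : ℕ, w (j + 1) = s j := by
    intro j
    have hrec := coefT_succ a c p hp hc j
    have hPne : ((q:ℂ)^4) ^ j ≠ 0 := pow_ne_zero _ (pow_ne_zero _ hQ)
    have hd1 := hden1 j
    have hd2 := hden2 j
    have epj : p ^ j = (((q:ℂ)^4) ^ j)⁻¹ := by rw [hpdef, inv_pow]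
    have epz : (p * z) ^ j = (((q:ℂ)^4) ^ j)⁻¹ * z ^ j := by
      rw [mul_pow, epj]
    have epz1 : (p * z) ^ (j + 1) = (((q:ℂ)^4) ^ j)⁻¹ * z ^ j * (p * z) := by
      rw [pow_succ, epz]
    have eqz1 : (((q:ℂ)^4) * z) ^ (j + 1) = ((q:ℂ)^4) ^ j * z ^ j * (((q:ℂ)^4) * z) := by
      rw [pow_succ, mul_pow]
    have ez1 : z ^ (j + 1) = z ^ j * z := pow_succ z j
    simp only [hwdef, hsdef, ht, hrec, epz1, eqz1, ez1, epz, epj]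
    rw [hpdef] at hd1 hd2 ⊢
    rw [inv_pow] at hd1 hd2
    rw [hcdef] at hd2 ⊢
    rw [ha]
    generalize hPP : (((q:ℂ)^4) ^ j) = P at hPne hd1 hd2 ⊢
    generalize hvv : (z ^ j) = v
    linear_combination ratio_alg (q:ℂ) ε P v z
      (coefT (-((q:ℂ)^2)⁻¹ * ε⁻¹) (((q:ℂ)^6)⁻¹) (((q:ℂ)^4)⁻¹) j) hQ hε hPne hd1 hd2
  -- assemble
  rw [show ((q:ℂ)⁻¹ * (∑' j : ℕ, t j * (p * z) ^ j)) =
      ∑' j : ℕ, (q:ℂ)⁻¹ * (t j * (p * z) ^ j) from tsum_mul_left.symm]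
  rw [show ((q:ℂ) * (∑' j : ℕ, t j * (((q:ℂ)^4) * z) ^ j)) =
      ∑' j : ℕ, (q:ℂ) * (t j * (((q:ℂ)^4) * z) ^ j) from tsum_mul_left.symm]
  rw [show ((∑' j : ℕ, (q:ℂ)⁻¹ * (t j * (p * z) ^ j)) * (1 + ε⁻¹ * (q:ℂ)^4 * z)) =
      ∑' j : ℕ, (q:ℂ)⁻¹ * (t j * (p * z) ^ j) * (1 + ε⁻¹ * (q:ℂ)^4 * z) from
      tsum_mul_right.symm]
  rw [show ((∑' j : ℕ, t j * z ^ j) * ((q:ℂ) + (q:ℂ)⁻¹ - (q:ℂ)^5 * z)) =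
      ∑' j : ℕ, t j * z ^ j * ((q:ℂ) + (q:ℂ)⁻¹ - (q:ℂ)^5 * z) from tsum_mul_right.symm]
  rw [← Summable.tsum_sub hF1 hF2, ← Summable.tsum_sub (hF1.sub hF2) hF3]
  have hsplit : ∀ j : ℕ,
      t j * z ^ j * ((q:ℂ) + (q:ℂ)⁻¹ - (q:ℂ)^5 * z)
        - (q:ℂ) * (t j * ((q:ℂ)^4 * z) ^ j)
        - (q:ℂ)⁻¹ * (t j * (p * z) ^ j) * (1 + ε⁻¹ * (q:ℂ)^4 * z)
      = w j - s j := by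
    intro j
    simp only [hwdef, hsdef]
    ring
  rw [tsum_congr hsplit, Summable.tsum_sub hw hs]
  rw [Summable.tsum_eq_zero_add hw, hw0, zero_add, tsum_congr hterm, sub_self]


/-- The function `g(x) = x ₁φ₁(-q⁻²ε⁻¹; q⁻⁶; q⁻⁴, ε q^{-2γ-5} λ² x²)` satisfies the
reduced eigenvalue equation
`0 = g(x)(q + q⁻¹ - ε q^{-2γ} λ² x²) - q⁻¹ g(q²x) - q g(q⁻²x)(1 + q^{-2γ-1} λ² x²)`
for every real `x`, where `λ = q - q⁻¹`. -/
theorem odd_solution (q γ : ℝ) (hq : 1 < q) (ε : ℂ) (hε : ε ≠ 0)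
    (g : ℝ → ℂ)
    (hg : ∀ x : ℝ, g x = (x : ℂ) *
      phi11 (-(q : ℂ) ^ (-2 : ℤ) * ε⁻¹) ((q : ℂ) ^ (-6 : ℤ)) ((q : ℂ) ^ (-4 : ℤ))
        (ε * ((q ^ (-2 * γ - 5) : ℝ) : ℂ) * ((q - q⁻¹ : ℝ) : ℂ) ^ 2 * (x : ℂ) ^ 2)) :
    ∀ x : ℝ,
      0 = g x * ((q : ℂ) + (q : ℂ)⁻¹ -
            ε * ((q ^ (-2 * γ) : ℝ) : ℂ) * ((q - q⁻¹ : ℝ) : ℂ) ^ 2 * (x : ℂ) ^ 2) -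
        (q : ℂ)⁻¹ * g (q ^ 2 * x) -
        (q : ℂ) * g (q⁻¹ ^ 2 * x) *
          (1 + ((q ^ (-2 * γ - 1) : ℝ) : ℂ) * ((q - q⁻¹ : ℝ) : ℂ) ^ 2 * (x : ℂ) ^ 2) := by
  intro x
  have hq0 : (0:ℝ) < q := lt_trans one_pos hq
  have hQ : (q:ℂ) ≠ 0 := by
    simpa using Complex.ofReal_ne_zero.mpr hq0.ne'
  have hm2 : (q:ℂ) ^ (-2 : ℤ) = ((q:ℂ)^2)⁻¹ := by
    rw [zpow_neg]; norm_cast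
  have hm4 : (q:ℂ) ^ (-4 : ℤ) = ((q:ℂ)^4)⁻¹ := by
    rw [zpow_neg]; norm_cast
  have hm6 : (q:ℂ) ^ (-6 : ℤ) = ((q:ℂ)^6)⁻¹ := by
    rw [zpow_neg]; norm_cast
  have hc1 : ((q ^ (-2 * γ) : ℝ) : ℂ) = ((q ^ (-2 * γ - 5) : ℝ) : ℂ) * (q:ℂ)^5 := by
    rw [show (-2 * γ) = (-2 * γ - 5) + ((5:ℕ):ℝ) by push_cast; ring,
      Real.rpow_add hq0, Real.rpow_natCast]
    push_cast; ring
  have hc2 : ((q ^ (-2 * γ - 1) : ℝ) : ℂ) = ((q ^ (-2 * γ - 5) : ℝ) : ℂ) * (q:ℂ)^4 := by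
    rw [show (-2 * γ - 1) = (-2 * γ - 5) + ((4:ℕ):ℝ) by push_cast; ring,
      Real.rpow_add hq0, Real.rpow_natCast]
    push_cast; ring
  have harg2 : ε * ((q ^ (-2 * γ - 5) : ℝ) : ℂ) * ((q - q⁻¹ : ℝ) : ℂ) ^ 2 *
        ((q ^ 2 * x : ℝ) : ℂ) ^ 2
      = (q:ℂ)^4 * (ε * ((q ^ (-2 * γ - 5) : ℝ) : ℂ) * ((q - q⁻¹ : ℝ) : ℂ) ^ 2 *
        ((x : ℝ) : ℂ) ^ 2) := by
    push_cast; ring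
  have harg3 : ε * ((q ^ (-2 * γ - 5) : ℝ) : ℂ) * ((q - q⁻¹ : ℝ) : ℂ) ^ 2 *
        ((q⁻¹ ^ 2 * x : ℝ) : ℂ) ^ 2
      = ((q:ℂ)^4)⁻¹ * (ε * ((q ^ (-2 * γ - 5) : ℝ) : ℂ) * ((q - q⁻¹ : ℝ) : ℂ) ^ 2 *
        ((x : ℝ) : ℂ) ^ 2) := by
    push_cast; ring
  have hx2 : ((q ^ 2 * x : ℝ) : ℂ) = (q:ℂ)^2 * (x:ℂ) := by push_cast; ring
  have hx3 : ((q⁻¹ ^ 2 * x : ℝ) : ℂ) = ((q:ℂ)⁻¹)^2 * (x:ℂ) := by push_cast; ring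
  have M := master q hq ε hε
    (ε * ((q ^ (-2 * γ - 5) : ℝ) : ℂ) * ((q - q⁻¹ : ℝ) : ℂ) ^ 2 * ((x : ℝ) : ℂ) ^ 2)
  rw [hg x, hg (q ^ 2 * x), hg (q⁻¹ ^ 2 * x)]
  rw [hm2, hm4, hm6]
  simp only [phi11_eq]
  rw [harg2, harg3, hx2, hx3, hc1, hc2]
  set z : ℂ := ε * ((q ^ (-2 * γ - 5) : ℝ) : ℂ) * ((q - q⁻¹ : ℝ) : ℂ) ^ 2 * ((x : ℝ) : ℂ) ^ 2
    with hzdef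
  set S1 : ℂ := ∑' j : ℕ, coefT (-((q:ℂ)^2)⁻¹ * ε⁻¹) (((q:ℂ)^6)⁻¹) (((q:ℂ)^4)⁻¹) j * z ^ j
    with hS1
  set S2 : ℂ := ∑' j : ℕ, coefT (-((q:ℂ)^2)⁻¹ * ε⁻¹) (((q:ℂ)^6)⁻¹) (((q:ℂ)^4)⁻¹) j *
    ((q:ℂ)^4 * z) ^ j with hS2
  set S3 : ℂ := ∑' j : ℕ, coefT (-((q:ℂ)^2)⁻¹ * ε⁻¹) (((q:ℂ)^6)⁻¹) (((q:ℂ)^4)⁻¹) j *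
    (((q:ℂ)^4)⁻¹ * z) ^ j with hS3
  have hQQ : (q:ℂ) * (q:ℂ)⁻¹ = 1 := mul_inv_cancel₀ hQ
  have hEE : ε * ε⁻¹ = 1 := mul_inv_cancel₀ hε
  linear_combination (-(x:ℂ)) * M +
    ((x:ℂ) * (q:ℂ) * S2 + (x:ℂ) * (q:ℂ)⁻¹ * S3 *
      (1 + ((q ^ (-2 * γ - 5) : ℝ) : ℂ) * (q:ℂ)^4 * ((q - q⁻¹ : ℝ) : ℂ) ^ 2 * ((x:ℝ):ℂ) ^ 2)) * hQQ -
    ((x:ℂ) * (q:ℂ)⁻¹ * S3 *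
      (((q ^ (-2 * γ - 5) : ℝ) : ℂ) * (q:ℂ)^4 * ((q - q⁻¹ : ℝ) : ℂ) ^ 2 * ((x:ℝ):ℂ) ^ 2)) * hEE
end

section
/- Let q > 1 be real, n ∈ ℕ, and c > 0 real. Then (q^{4n−2};q^{−4})_∞ · (−q^{4n−4} c^{−1};q^{−4})_∞ · (−q^{−4n} c;q^{−4})_∞ = (−c)^{−n} q^{4n²−2n} (q^{−2};q^{−4})_n · (q^{−2};q^{−4})_∞ · (−c;q^{−4})_∞ · (−c^{−1} q^{−4};q^{−4})_∞. (This evaluates the coefficient C_e of the even-series expansion at the Fock points ε = −q^{−4n}, showing C_e = (−c)^{−n} q^{4n²−2n} (q^{−2};q^{−4})_n.) -/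
open scoped BigOperators

/-- The infinite q-shifted factorial `(a;p)_∞ = ∏_{i=0}^∞ (1 - a p^i)`. -/
noncomputable def qPochInf (a p : ℂ) : ℂ :=
  ∏' i : ℕ, (1 - a * p ^ i)

open Filter in
lemma multipliable_aux (a p : ℂ) (hp : ‖p‖ < 1)
    (h0 : ∀ i : ℕ, 1 - a * p ^ i ≠ 0) :
    Multipliable (fun i : ℕ => 1 - a * p ^ i) := by
  apply Complex.multipliable_of_summable_log
  have hg : Summable (fun i : ℕ => ‖a‖ * ‖p‖ ^ i) :=
    (summable_geometric_of_lt_one (norm_nonneg p) hp).mul_left _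
  have htend : Filter.Tendsto (fun i : ℕ => ‖a * p ^ i‖) atTop (nhds 0) := by
    simpa [norm_mul, norm_pow] using hg.tendsto_atTop_zero
  have hev : ∀ᶠ i in atTop, ‖a * p ^ i‖ < 1/2 :=
    htend.eventually_lt_const (by norm_num)
  obtain ⟨N, hN⟩ := Filter.eventually_atTop.1 hev
  rw [← summable_nat_add_iff N]
  apply Summable.of_norm
  have hb : Summable (fun i : ℕ => (3/2 * (‖a‖ * ‖p‖ ^ N)) * ‖p‖ ^ i) :=
    (summable_geometric_of_lt_one (norm_nonneg p) hp).mul_left _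
  apply Summable.of_nonneg_of_le (fun i => norm_nonneg _) (fun i => ?_) hb
  have h1 : ‖a * p ^ (i + N)‖ ≤ 1/2 := le_of_lt (hN (i + N) (by omega))
  have h2 : ‖Complex.log (1 - a * p ^ (i + N))‖ ≤ 3/2 * ‖a * p ^ (i + N)‖ := by
    have := Complex.norm_log_one_add_half_le_self (z := -(a * p ^ (i + N))) (by simpa using h1)
    simpa [sub_eq_add_neg] using this
  calc ‖Complex.log (1 - a * p ^ (i + N))‖ ≤ 3/2 * ‖a * p ^ (i + N)‖ := h2
    _ = 3/2 * (‖a‖ * ‖p‖ ^ N) * ‖p‖ ^ i := by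
        rw [norm_mul, norm_pow, pow_add]; ring

lemma qPochInf_split (a p : ℂ) (hp : ‖p‖ < 1)
    (h0 : ∀ i : ℕ, 1 - a * p ^ i ≠ 0) (n : ℕ) :
    qPochInf a p = qPoch a p n * qPochInf (a * p ^ n) p := by
  have h0' : ∀ i : ℕ, 1 - (a * p ^ n) * p ^ i ≠ 0 := fun i => by
    have := h0 (n + i); rwa [pow_add, ← mul_assoc] at this
  have hm : Multipliable (fun i : ℕ => 1 - a * p ^ (i + n)) := by
    apply (multipliable_aux (a * p ^ n) p hp h0').congr
    intro i; rw [pow_add]; ring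
  have h1 := (Multipliable.prod_mul_tprod_nat_mul' (f := fun i => 1 - a * p ^ i) (k := n) hm).symm
  have h2 : (∏' i : ℕ, (1 - a * p ^ (i + n))) = ∏' i : ℕ, (1 - a * p ^ n * p ^ i) :=
    tprod_congr fun i => by rw [pow_add]; ring
  rw [qPochInf, qPoch, qPochInf, h1, h2]

lemma qPoch_succ' (a p : ℂ) (n : ℕ) :
    qPoch a p (n + 1) = qPoch (a * p) p n * (1 - a) := by
  rw [qPoch, Finset.prod_range_succ', qPoch]
  congr 1
  · exact Finset.prod_congr rfl fun i _ => by ring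
  · simp

lemma qPoch_succ (a p : ℂ) (n : ℕ) :
    qPoch a p (n + 1) = qPoch a p n * (1 - a * p ^ n) :=
  Finset.prod_range_succ _ _

lemma fin_id (q : ℝ) (hq : 1 < q) (c : ℝ) (hc : 0 < c) (n : ℕ) :
    qPoch ((q : ℂ) ^ (4 * (n : ℤ) - 2)) ((q : ℂ) ^ (-4 : ℤ)) n *
      qPoch (-(q : ℂ) ^ (4 * (n : ℤ) - 4) * (c : ℂ)⁻¹) ((q : ℂ) ^ (-4 : ℤ)) n =
    (-(c : ℂ)) ^ (-(n : ℤ)) * (q : ℂ) ^ (4 * (n : ℤ) ^ 2 - 2 * (n : ℤ)) *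
      qPoch ((q : ℂ) ^ (-2 : ℤ)) ((q : ℂ) ^ (-4 : ℤ)) n *
      qPoch (-(c : ℂ)) ((q : ℂ) ^ (-4 : ℤ)) n := by
  have hQ : (q : ℂ) ≠ 0 := by
    simp only [ne_eq, Complex.ofReal_eq_zero]; linarith
  have hC : (c : ℂ) ≠ 0 := by
    simp only [ne_eq, Complex.ofReal_eq_zero]; linarith
  have hnC : -(c : ℂ) ≠ 0 := neg_ne_zero.2 hC
  induction n with
  | zero => simp [qPoch]
  | succ n ih =>
    push_cast
    push_cast at ih
    set Q := (q : ℂ) with hQdef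
    have ea : Q ^ (4 * ((n : ℤ) + 1) - 2) * Q ^ (-4 : ℤ) = Q ^ (4 * (n : ℤ) - 2) := by
      rw [← zpow_add₀ hQ]; congr 1; ring
    have eb : (-Q ^ (4 * ((n : ℤ) + 1) - 4) * (c : ℂ)⁻¹) * Q ^ (-4 : ℤ)
        = -Q ^ (4 * (n : ℤ) - 4) * (c : ℂ)⁻¹ := by
      rw [show (-Q ^ (4 * ((n : ℤ) + 1) - 4) * (c : ℂ)⁻¹) * Q ^ (-4 : ℤ)
          = -(Q ^ (4 * ((n : ℤ) + 1) - 4) * Q ^ (-4 : ℤ)) * (c : ℂ)⁻¹ by ring,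
        ← zpow_add₀ hQ]
      congr 2; ring
    rw [qPoch_succ', qPoch_succ' (-Q ^ (4 * ((n:ℤ) + 1) - 4) * (c:ℂ)⁻¹), ea, eb,
      qPoch_succ, qPoch_succ]
    have e1 : Q ^ (4 * ((n : ℤ) + 1) - 2) = Q ^ (4 * (n : ℤ)) * Q ^ (2 : ℤ) := by
      rw [← zpow_add₀ hQ]; congr 1; ring
    have e2 : Q ^ (4 * ((n : ℤ) + 1) - 4) = Q ^ (4 * (n : ℤ)) := by
      rw [show 4 * ((n : ℤ) + 1) - 4 = 4 * (n : ℤ) from by ring]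
    have e3 : (Q ^ (-4 : ℤ)) ^ n = (Q ^ (4 * (n : ℤ)))⁻¹ := by
      rw [← zpow_natCast (Q ^ (-4 : ℤ)) n, ← zpow_mul, ← zpow_neg,
        show (-4 : ℤ) * n = -(4 * (n : ℤ)) from by ring]
    have e4 : Q ^ (4 * ((n : ℤ) + 1) ^ 2 - 2 * ((n : ℤ) + 1))
        = Q ^ (4 * (n : ℤ) ^ 2 - 2 * (n : ℤ)) * (Q ^ (4 * (n : ℤ)) * Q ^ (4 * (n : ℤ)) * Q ^ (2 : ℤ)) := by
      rw [show (4 * ((n : ℤ) + 1) ^ 2 - 2 * ((n : ℤ) + 1))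
          = (4 * (n : ℤ) ^ 2 - 2 * (n : ℤ)) + (4 * n + (4 * n + 2)) by ring,
        zpow_add₀ hQ, zpow_add₀ hQ, zpow_add₀ hQ]
      ring
    have e5 : (-(c : ℂ)) ^ (-((n : ℤ) + 1)) = (-(c : ℂ)) ^ (-(n : ℤ)) * (-(c : ℂ))⁻¹ := by
      rw [show -((n : ℤ) + 1) = -(n : ℤ) + (-1) by ring, zpow_add₀ hnC, zpow_neg_one]
    rw [e1, e2, e3, e4, e5]
    have hu : Q ^ (4 * (n : ℤ)) ≠ 0 := zpow_ne_zero _ hQ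
    have hv : Q ^ (2 : ℤ) ≠ 0 := zpow_ne_zero _ hQ
    set u := Q ^ (4 * (n : ℤ))
    set v := Q ^ (2 : ℤ)
    have e6 : Q ^ (-2 : ℤ) = v⁻¹ := by
      rw [show (-2 : ℤ) = -(2 : ℤ) from rfl, zpow_neg]
    have hs : (1 - u * v) * (1 - -u * (c : ℂ)⁻¹)
        = (u * u * v) * (-(c:ℂ))⁻¹ * ((1 - Q ^ (-2 : ℤ) * u⁻¹) * (1 - -(c:ℂ) * u⁻¹)) := by
      rw [e6]
      field_simp
      ring
    linear_combination
      ((1 - u * v) * (1 - -u * (c : ℂ)⁻¹)) * ih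
      + ((-(c : ℂ)) ^ (-(n : ℤ)) * Q ^ (4 * (n : ℤ) ^ 2 - 2 * (n : ℤ)) *
          qPoch (Q ^ (-2 : ℤ)) (Q ^ (-4 : ℤ)) n * qPoch (-(c : ℂ)) (Q ^ (-4 : ℤ)) n) * hs

lemma term_ne (q : ℝ) (hq : 1 < q) (m : ℤ) (hm : m ≠ 0) : (1 : ℂ) - (q : ℂ) ^ m ≠ 0 := by
  have h1 : (q : ℂ) ^ m = ((q ^ m : ℝ) : ℂ) := (Complex.ofReal_zpow q m).symm
  rw [h1, ← Complex.ofReal_one, ← Complex.ofReal_sub]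
  simp only [ne_eq, Complex.ofReal_eq_zero, sub_eq_zero]
  intro h
  exact hm (zpow_right_injective₀ (by linarith) (by linarith)
    ((zpow_zero q).symm.trans h : q ^ (0 : ℤ) = q ^ m).symm)

lemma term_pos_ne (q c : ℝ) (hq : 0 < q) (hc : 0 < c) (m : ℤ) :
    (1 : ℂ) + (c : ℂ) * (q : ℂ) ^ m ≠ 0 := by
  have h1 : (1 : ℂ) + (c : ℂ) * (q : ℂ) ^ m = ((1 + c * q ^ m : ℝ) : ℂ) := by
    push_cast; ring
  rw [h1]
  simp only [ne_eq, Complex.ofReal_eq_zero]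
  positivity

/-- Evaluation of the coefficient `C_e` at the Fock points `ε = -q^{-4n}`:
`(q^{4n-2};q⁻⁴)_∞ (-q^{4n-4}c⁻¹;q⁻⁴)_∞ (-q^{-4n}c;q⁻⁴)_∞
  = (-c)^{-n} q^{4n²-2n} (q⁻²;q⁻⁴)_n (q⁻²;q⁻⁴)_∞ (-c;q⁻⁴)_∞ (-c⁻¹q⁻⁴;q⁻⁴)_∞`. -/
theorem Ce_fock_evaluation (q : ℝ) (hq : 1 < q) (n : ℕ) (c : ℝ) (hc : 0 < c) :
    qPochInf ((q : ℂ) ^ (4 * (n : ℤ) - 2)) ((q : ℂ) ^ (-4 : ℤ)) *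
      qPochInf (-(q : ℂ) ^ (4 * (n : ℤ) - 4) * (c : ℂ)⁻¹) ((q : ℂ) ^ (-4 : ℤ)) *
      qPochInf (-(q : ℂ) ^ (-(4 * (n : ℤ))) * (c : ℂ)) ((q : ℂ) ^ (-4 : ℤ)) =
    (-(c : ℂ)) ^ (-(n : ℤ)) * (q : ℂ) ^ (4 * (n : ℤ) ^ 2 - 2 * (n : ℤ)) *
      qPoch ((q : ℂ) ^ (-2 : ℤ)) ((q : ℂ) ^ (-4 : ℤ)) n *
      qPochInf ((q : ℂ) ^ (-2 : ℤ)) ((q : ℂ) ^ (-4 : ℤ)) *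
      qPochInf (-(c : ℂ)) ((q : ℂ) ^ (-4 : ℤ)) *
      qPochInf (-(c : ℂ)⁻¹ * (q : ℂ) ^ (-4 : ℤ)) ((q : ℂ) ^ (-4 : ℤ)) := by
  have hq0 : (0 : ℝ) < q := by linarith
  have hQ : (q : ℂ) ≠ 0 := by simp only [ne_eq, Complex.ofReal_eq_zero]; linarith
  set Q := (q : ℂ) with hQdef
  set p := Q ^ (-4 : ℤ) with hpdef
  -- ‖p‖ < 1
  have hp : ‖p‖ < 1 := by
    rw [hpdef, norm_zpow, Complex.norm_real, Real.norm_eq_abs, abs_of_pos hq0]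
    rw [show (-4 : ℤ) = -(4 : ℤ) from rfl, zpow_neg]
    rw [inv_lt_one_iff₀]
    right
    have : (1:ℝ) < q ^ (4:ℕ) := one_lt_pow₀ hq (by norm_num)
    rw [show ((4:ℤ) : ℤ) = ((4:ℕ) : ℤ) from rfl, zpow_natCast]
    exact this
  -- p powers
  have hpow : ∀ i : ℕ, p ^ i = Q ^ ((-4 : ℤ) * i) := fun i => by
    rw [hpdef, ← zpow_natCast (Q ^ (-4 : ℤ)) i, ← zpow_mul]
  -- nonvanishing
  have h0A : ∀ i : ℕ, 1 - Q ^ (4 * (n : ℤ) - 2) * p ^ i ≠ 0 := fun i => by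
    rw [hpow i, ← zpow_add₀ hQ]
    exact term_ne q hq _ (by omega)
  have h0B : ∀ i : ℕ, 1 - (-Q ^ (4 * (n : ℤ) - 4) * (c : ℂ)⁻¹) * p ^ i ≠ 0 := fun i => by
    rw [hpow i]
    have : 1 - (-Q ^ (4 * (n : ℤ) - 4) * (c : ℂ)⁻¹) * Q ^ ((-4 : ℤ) * i)
        = 1 + ((c⁻¹ : ℝ) : ℂ) * Q ^ ((4 * (n : ℤ) - 4) + (-4 : ℤ) * i) := by
      rw [zpow_add₀ hQ]; push_cast; ring
    rw [this]
    exact term_pos_ne q c⁻¹ hq0 (by positivity) _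
  have h0C : ∀ i : ℕ, 1 - (-(c : ℂ)) * p ^ i ≠ 0 := fun i => by
    rw [hpow i]
    have : 1 - (-(c : ℂ)) * Q ^ ((-4 : ℤ) * i) = 1 + (c : ℂ) * Q ^ ((-4 : ℤ) * i) := by ring
    rw [this]
    exact term_pos_ne q c hq0 hc _
  -- the three splits
  have sA := qPochInf_split (Q ^ (4 * (n : ℤ) - 2)) p hp h0A n
  have sB := qPochInf_split (-Q ^ (4 * (n : ℤ) - 4) * (c : ℂ)⁻¹) p hp h0B n
  have sC := qPochInf_split (-(c : ℂ)) p hp h0C n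
  -- identify shifted arguments
  have eA : Q ^ (4 * (n : ℤ) - 2) * p ^ n = Q ^ (-2 : ℤ) := by
    rw [hpow n, ← zpow_add₀ hQ]; congr 1; ring
  have eB : (-Q ^ (4 * (n : ℤ) - 4) * (c : ℂ)⁻¹) * p ^ n = -(c : ℂ)⁻¹ * Q ^ (-4 : ℤ) := by
    rw [hpow n, show (-Q ^ (4 * (n : ℤ) - 4) * (c : ℂ)⁻¹) * Q ^ ((-4 : ℤ) * n)
      = -(Q ^ (4 * (n : ℤ) - 4) * Q ^ ((-4 : ℤ) * n)) * (c : ℂ)⁻¹ from by ring,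
      ← zpow_add₀ hQ, show (4 * (n : ℤ) - 4) + (-4 : ℤ) * n = (-4 : ℤ) from by ring]
    ring
  have eC : (-(c : ℂ)) * p ^ n = -Q ^ (-(4 * (n : ℤ))) * (c : ℂ) := by
    rw [hpow n, show ((-4 : ℤ) * n) = -(4 * (n : ℤ)) from by ring]; ring
  rw [eA] at sA
  rw [eB] at sB
  rw [eC] at sC
  rw [sA, sB, sC]
  linear_combination
    (qPochInf (Q ^ (-2 : ℤ)) p * qPochInf (-(c : ℂ)⁻¹ * Q ^ (-4 : ℤ)) p *
      qPochInf (-Q ^ (-(4 * (n : ℤ))) * (c : ℂ)) p) * fin_id q hq c hc n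
end
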